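/- Let (M, f, ⋆) and (N, g, ⋉) be (1,2)-magmas, let κ₁, κ₂ : ℕ with κ₁ ≥ 1, and let νM : M → ℕ and νN : N → ℕ satisfy: νM m ≥ 1 for all m, νM (f m) = νM m + κ₁ and νM (m ⋆ m') = νM m + νM m' + κ₂ for all m, m' ∈ M, and νN (g x) = νN x + κ₁ and νN (x ⋉ y) = νN x + νN y + κ₂ for all x, y ∈ N. If Γ : M → N is a (1,2)-magma morphism such that νN (Γ m) = νM m for every irreducible m ∈ M, then Γ preserves the norm on all of M: νN (Γ m) = νM m for every m ∈ M. -/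
import Mathlib


/-- Let `(M, f, ⋆)` and `(N, g, ⋉)` be (1,2)-magmas carrying norms that
shift by `κ₁ ≥ 1` under the unary maps and add up to `κ₂` under the binary maps, with
`νM m ≥ 1` for all `m`.  If a (1,2)-magma morphism `Γ : M → N` preserves the norm on
irreducible elements of `M`, then it preserves the norm everywhere. -/
theorem stmt19 {M N : Type*}
    (f : M → M) (star : M → M → M)
    (g : N → N) (ltimes : N → N → N)
    (κ₁ κ₂ : ℕ) (hκ₁ : 1 ≤ κ₁)
    (νM : M → ℕ) (νN : N → ℕ)
    (hνM1 : ∀ m, 1 ≤ νM m)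
    (hνMf : ∀ m, νM (f m) = νM m + κ₁)
    (hνMs : ∀ m m', νM (star m m') = νM m + νM m' + κ₂)
    (hνNg : ∀ x, νN (g x) = νN x + κ₁)
    (hνNl : ∀ x y, νN (ltimes x y) = νN x + νN y + κ₂)
    (Γ : M → N)
    (hΓf : ∀ m, Γ (f m) = g (Γ m))
    (hΓs : ∀ m m', Γ (star m m') = ltimes (Γ m) (Γ m'))
    (hirr : ∀ m : M, (∀ m', f m' ≠ m) → (∀ m₁ m₂, star m₁ m₂ ≠ m) → νN (Γ m) = νM m) :
    ∀ m : M, νN (Γ m) = νM m := by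
  intro m
  generalize hn : νM m = n
  induction n using Nat.strong_induction_on generalizing m with
  | _ n ih =>
    subst hn
    by_cases hf : ∃ m', f m' = m
    · obtain ⟨m', rfl⟩ := hf
      rw [hΓf, hνNg, hνMf, ih (νM m') (by rw [hνMf]; omega) m' rfl]
    · by_cases hs : ∃ m₁ m₂, star m₁ m₂ = m
      · obtain ⟨m₁, m₂, rfl⟩ := hs
        have h1 := hνM1 m₁
        have h2 := hνM1 m₂
        rw [hΓs, hνNl, hνMs,
          ih (νM m₁) (by rw [hνMs]; omega) m₁ rfl,
          ih (νM m₂) (by rw [hνMs]; omega) m₂ rfl]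
      · push_neg at hf hs
        exact hirr m hf hs
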